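/- With data (z_i, H(z_i)) for i = 1,…,M and p, q : ℂ → ℂ^k, define Whitfield's step-p error E_WF(w) = ∑_{i=1}^{M} (1/|d(z_i; w')|²) |n(z_i; w) − r(z_i; w') d(z_i; w) + n(z_i; w') − d(z_i; w') H(z_i)|², where w' = w⁽ᵖ⁻¹⁾ is the previous iterate, n(z;w) = wᵀp(z), d(z;w) = wᵀq(z), r = n/d. If the iteration has converged (w' = w) and d(z_i; w) ≠ 0 for all i, then the Wirtinger derivative of E_WF at w equals ∑_{i=1}^{M} (1/d(z_i; w)) (p(z_i) − r(z_i; w) q(z_i)) · conj(r(z_i; w) − H(z_i)). -/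

import Mathlib

open scoped ComplexConjugate

/-- The (unconjugated) dot product on `ℂ^k`. -/
noncomputable def dotc {k : ℕ} (w v : Fin k → ℂ) : ℂ := ∑ j, w j * v j

/-- Wirtinger derivative `df/dw_j = (1/2)(∂f/∂x_j − i ∂f/∂y_j)` of a
real-valued function of `w ∈ ℂ^k`. -/
noncomputable def wirt {k : ℕ} (f : (Fin k → ℂ) → ℝ) (w : Fin k → ℂ)
    (j : Fin k) : ℂ :=
  (1 / 2 : ℂ) * (((fderiv ℝ f w (Pi.single j 1) : ℝ) : ℂ)
    - Complex.I * ((fderiv ℝ f w (Pi.single j Complex.I) : ℝ) : ℂ))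

noncomputable def dotCLM {k : ℕ} (x : Fin k → ℂ) : (Fin k → ℂ) →L[ℂ] ℂ :=
  ∑ j, x j • ContinuousLinearMap.proj j

lemma dotCLM_apply {k : ℕ} (x v : Fin k → ℂ) : dotCLM x v = dotc v x := by
  simp [dotCLM, dotc, mul_comm]

lemma hasFDerivAt_dotc {k : ℕ} (x w : Fin k → ℂ) :
    HasFDerivAt (fun v => dotc v x) ((dotCLM x).restrictScalars ℝ) w := by
  have h := ((dotCLM x).hasFDerivAt (x := w)).restrictScalars ℝ
  simpa [funext fun v => dotCLM_apply x v] using h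

lemma dotc_single {k : ℕ} (x : Fin k → ℂ) (j : Fin k) (a : ℂ) :
    dotc (Pi.single j a) x = a * x j := by
  simp [dotc, Pi.single_apply, ite_mul]

lemma hasFDerivAt_affine {k : ℕ} (x y : Fin k → ℂ) (r b : ℂ) (w : Fin k → ℂ) :
    HasFDerivAt (fun v => dotc v x - r * dotc v y + b)
      ((dotCLM x).restrictScalars ℝ - r • (dotCLM y).restrictScalars ℝ) w := by
  exact ((hasFDerivAt_dotc x w).sub ((hasFDerivAt_dotc y w).const_mul r)).add_const b

lemma hasFDerivAt_normsq_affine {k : ℕ} (x y : Fin k → ℂ) (r b : ℂ) (w : Fin k → ℂ) :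
    HasFDerivAt (fun v => ‖dotc v x - r * dotc v y + b‖ ^ 2)
      (2 • (innerSL ℝ (dotc w x - r * dotc w y + b)).comp
        ((dotCLM x).restrictScalars ℝ - r • (dotCLM y).restrictScalars ℝ)) w :=
  (hasFDerivAt_affine x y r b w).norm_sq

lemma fderiv_eval {k M : ℕ} (z H : Fin M → ℂ) (p q : ℂ → Fin k → ℂ)
    (w u : Fin k → ℂ) :
    fderiv ℝ (fun v => ∑ i, (1 / ‖dotc w (q (z i))‖ ^ 2)
        * ‖dotc v (p (z i))
            - (dotc w (p (z i)) / dotc w (q (z i))) * dotc v (q (z i))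
            + dotc w (p (z i)) - dotc w (q (z i)) * H i‖ ^ 2) w u
    = ∑ i, (1 / ‖dotc w (q (z i))‖ ^ 2) *
        (2 * (conj (dotc w (p (z i))
            - (dotc w (p (z i)) / dotc w (q (z i))) * dotc w (q (z i))
            + dotc w (p (z i)) - dotc w (q (z i)) * H i)
          * (dotc u (p (z i))
            - (dotc w (p (z i)) / dotc w (q (z i))) * dotc u (q (z i)))).re) := by
  have h : HasFDerivAt (fun v => ∑ i, (1 / ‖dotc w (q (z i))‖ ^ 2)
        * ‖dotc v (p (z i))
            - (dotc w (p (z i)) / dotc w (q (z i))) * dotc v (q (z i))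
            + dotc w (p (z i)) - dotc w (q (z i)) * H i‖ ^ 2)
      (∑ i, (1 / ‖dotc w (q (z i))‖ ^ 2) •
        (2 • (innerSL ℝ (dotc w (p (z i))
            - (dotc w (p (z i)) / dotc w (q (z i))) * dotc w (q (z i))
            + (dotc w (p (z i)) - dotc w (q (z i)) * H i))).comp
          ((dotCLM (p (z i))).restrictScalars ℝ
            - (dotc w (p (z i)) / dotc w (q (z i))) •
              (dotCLM (q (z i))).restrictScalars ℝ))) w := by
    refine HasFDerivAt.fun_sum fun i _ => ?_
    have hfun : (fun v => (1 / ‖dotc w (q (z i))‖ ^ 2)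
        * ‖dotc v (p (z i))
            - (dotc w (p (z i)) / dotc w (q (z i))) * dotc v (q (z i))
            + dotc w (p (z i)) - dotc w (q (z i)) * H i‖ ^ 2)
        = (fun v => (1 / ‖dotc w (q (z i))‖ ^ 2)
        * ‖dotc v (p (z i))
            - (dotc w (p (z i)) / dotc w (q (z i))) * dotc v (q (z i))
            + (dotc w (p (z i)) - dotc w (q (z i)) * H i)‖ ^ 2) := by
      funext v; ring_nf
    rw [hfun]
    exact (hasFDerivAt_normsq_affine (p (z i)) (q (z i))
      (dotc w (p (z i)) / dotc w (q (z i)))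
      (dotc w (p (z i)) - dotc w (q (z i)) * H i) w).const_mul
      (1 / ‖dotc w (q (z i))‖ ^ 2)
  rw [h.fderiv]
  simp only [ContinuousLinearMap.sum_apply, ContinuousLinearMap.smul_apply,
    ContinuousLinearMap.coe_smul', Pi.smul_apply, smul_eq_mul]
  refine Finset.sum_congr rfl fun i _ => ?_
  congr 1
  simp [Complex.inner, dotCLM_apply, two_smul, sub_add_eq_add_sub, add_sub_assoc,
    two_mul, mul_add, mul_sub]
  ring_nf

/-- Wirtinger derivative of Whitfield's error at a fixed point of
the iteration (the previous iterate `w'` is frozen and set equal to `w`). -/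
theorem wirtinger_gradient_wf_converged {k M : ℕ} (z H : Fin M → ℂ)
    (p q : ℂ → Fin k → ℂ) (w : Fin k → ℂ)
    (hd : ∀ i, dotc w (q (z i)) ≠ 0) (j : Fin k) :
    wirt (fun v => ∑ i, (1 / ‖dotc w (q (z i))‖ ^ 2)
        * ‖dotc v (p (z i))
            - (dotc w (p (z i)) / dotc w (q (z i))) * dotc v (q (z i))
            + dotc w (p (z i)) - dotc w (q (z i)) * H i‖ ^ 2) w j
      = ∑ i, (1 / dotc w (q (z i)))
          * (p (z i) j - (dotc w (p (z i)) / dotc w (q (z i))) * q (z i) j)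
          * conj (dotc w (p (z i)) / dotc w (q (z i)) - H i) := by
  unfold wirt
  rw [fderiv_eval, fderiv_eval]
  push_cast
  rw [Finset.mul_sum, ← Finset.sum_sub_distrib, Finset.mul_sum]
  refine Finset.sum_congr rfl fun i _ => ?_
  set d : ℂ := dotc w (q (z i)) with hdef
  set n : ℂ := dotc w (p (z i)) with hnef
  have hdi : d ≠ 0 := hd i
  have h1 : dotc (Pi.single j 1) (p (z i)) = p (z i) j := by
    rw [dotc_single]; ring
  have h2 : dotc (Pi.single j 1) (q (z i)) = q (z i) j := by
    rw [dotc_single]; ring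
  have h3 : dotc (Pi.single j Complex.I) (p (z i)) = Complex.I * p (z i) j :=
    dotc_single _ _ _
  have h4 : dotc (Pi.single j Complex.I) (q (z i)) = Complex.I * q (z i) j :=
    dotc_single _ _ _
  rw [h1, h2, h3, h4]
  set g : ℂ := p (z i) j - n / d * q (z i) j with hgef
  have hA : n - n / d * d + n - d * H i = d * (n / d - H i) := by
    field_simp
    ring
  rw [hA]
  have hIg : Complex.I * p (z i) j - n / d * (Complex.I * q (z i) j)
      = Complex.I * g := by rw [hgef]; ring
  rw [hIg]
  set a : ℂ := conj (d * (n / d - H i)) * g with haef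
  have hre : (conj (d * (n / d - H i)) * (Complex.I * g)).re = -a.im := by
    rw [haef]; rw [show conj (d * (n / d - H i)) * (Complex.I * g)
      = Complex.I * (conj (d * (n / d - H i)) * g) by ring]
    simp [Complex.mul_re]
  rw [hre]
  have hcomb : (1 / 2 : ℂ) * ((1 / (‖d‖:ℂ) ^ 2) * (2 * (a.re : ℂ))
      - Complex.I * ((1 / (‖d‖:ℂ) ^ 2) * (2 * ((-a.im : ℝ) : ℂ))))
      = (1 / (‖d‖:ℂ) ^ 2) * a := by
    push_cast
    rw [show (1 / (‖d‖:ℂ) ^ 2) * a = (1 / (‖d‖:ℂ) ^ 2) * ((a.re : ℂ) + a.im * Complex.I)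
      from by rw [Complex.re_add_im]]
    ring
  rw [hcomb, haef]
  have hdc : ((‖d‖:ℂ)) ^ 2 = d * conj d := by
    rw [Complex.mul_conj]
    norm_cast
    rw [Complex.sq_norm]
  rw [map_mul, hdc]
  have hconj : conj d ≠ 0 := by simpa using hdi
  field_simp
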